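/- Let W₁ and W₂ be matrices with the same number n of columns, and W = W₁ stacked over W₂ (their union). Then √svdb(W₁) + √svdb(W₂) ≥ √svdb(W), where svdb(M) = (1/n)(sum of singular values of M)². -/

import Mathlib

open Matrix

/-- The square root of a positive semidefinite matrix, as defined in Mathlib (Dec 2024),
since removed from Mathlib. -/
noncomputable def Matrix.PosSemidef.sqrt {n : Type*} {𝕜 : Type*} [Fintype n] [RCLike 𝕜]
    [PartialOrder 𝕜]     [DecidableEq n] {A : Matrix n n 𝕜} (hA : Matrix.PosSemidef A) : Matrix n n 𝕜 :=
  hA.1.eigenvectorUnitary.1 * diagonal ((↑) ∘ (√·) ∘ hA.1.eigenvalues) *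
    (star hA.1.eigenvectorUnitary : Matrix n n 𝕜)

section SqrtPort
open scoped MatrixOrder
variable {N : Type*} [Fintype N] [DecidableEq N]

lemma Matrix.PosSemidef.sqrt_eq_cfcSqrt {A : Matrix N N ℝ} (hA : A.PosSemidef) :
    hA.sqrt = CFC.sqrt A := by
  rw [CFC.sqrt_eq_real_sqrt A (Matrix.nonneg_iff_posSemidef.mpr hA), cfcₙ_eq_cfc, hA.1.cfc_eq]
  simp [Matrix.PosSemidef.sqrt, Matrix.IsHermitian.cfc]

lemma Matrix.PosSemidef.posSemidef_sqrt {A : Matrix N N ℝ} (hA : A.PosSemidef) :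
    hA.sqrt.PosSemidef := by
  rw [hA.sqrt_eq_cfcSqrt]
  exact Matrix.nonneg_iff_posSemidef.mp (CFC.sqrt_nonneg A)

lemma Matrix.PosSemidef.sqrt_mul_self {A : Matrix N N ℝ} (hA : A.PosSemidef) :
    hA.sqrt * hA.sqrt = A := by
  rw [hA.sqrt_eq_cfcSqrt]
  exact CFC.sqrt_mul_sqrt_self A (Matrix.nonneg_iff_posSemidef.mpr hA)

lemma Matrix.PosSemidef.sqrt_sq {A : Matrix N N ℝ} (hA : A.PosSemidef) :
    (hA.pow 2).sqrt = A := by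
  rw [(hA.pow 2).sqrt_eq_cfcSqrt]
  exact CFC.sqrt_sq A (Matrix.nonneg_iff_posSemidef.mpr hA)

end SqrtPort

section Aux
set_option linter.unusedSectionVars false
set_option maxHeartbeats 1600000
variable {N : Type*} [Fintype N] [DecidableEq N]

lemma trace_nonneg_of_psd {M : Matrix N N ℝ} (hM : M.PosSemidef) : 0 ≤ M.trace := by
  rw [Matrix.trace]
  refine Finset.sum_nonneg fun i _ => ?_
  have h := hM.dotProduct_mulVec_nonneg (Pi.single i 1)
  simpa [Matrix.mulVec_single, dotProduct, Pi.single_apply, Matrix.diag] using h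

lemma trace_mul_nonneg {A M : Matrix N N ℝ} (hA : A.PosSemidef) (hM : M.PosSemidef) :
    0 ≤ (A * M).trace := by
  have h1 : A * M = hA.sqrt * (hA.sqrt * M) := by
    rw [← Matrix.mul_assoc, hA.sqrt_mul_self]
  rw [h1, Matrix.trace_mul_comm]
  have h2 : hA.sqrt * M * hA.sqrt = hA.sqrt * M * hA.sqrtᴴ := by
    rw [hA.posSemidef_sqrt.isHermitian.eq]
  rw [h2]
  exact trace_nonneg_of_psd (hM.mul_mul_conjTranspose_same hA.sqrt)

lemma trace_mul_mono {A X Y : Matrix N N ℝ} (hA : A.PosSemidef) (h : (Y - X).PosSemidef) :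
    (A * X).trace ≤ (A * Y).trace := by
  have := trace_mul_nonneg hA h
  rw [Matrix.mul_sub, Matrix.trace_sub] at this
  linarith

lemma herm_transpose {A : Matrix N N ℝ} (hA : A.IsHermitian) : Aᵀ = A := by
  ext i j
  simpa using congrFun (congrFun hA.eq i) j

lemma herm_dot {A : Matrix N N ℝ} (hA : A.IsHermitian) (v w : N → ℝ) :
    v ⬝ᵥ (A *ᵥ w) = (A *ᵥ v) ⬝ᵥ w := by
  rw [Matrix.dotProduct_mulVec]
  congr 1
  rw [← Matrix.vecMul_transpose, herm_transpose hA]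

lemma sqrt_mono {A B : Matrix N N ℝ} (hA : A.PosSemidef) (hB : B.PosSemidef)
    (hAB : (B - A).PosSemidef) : (hB.sqrt - hA.sqrt).PosSemidef := by
  set S := hA.sqrt with hSdef
  set T := hB.sqrt with hTdef
  have hS : S.PosSemidef := hA.posSemidef_sqrt
  have hT : T.PosSemidef := hB.posSemidef_sqrt
  have hHerm : (T - S).IsHermitian := hT.isHermitian.sub hS.isHermitian
  refine hHerm.posSemidef_iff_eigenvalues_nonneg.mpr fun i => ?_
  by_contra hlt
  push_neg at hlt
  set μ := hHerm.eigenvalues i with hμdef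
  set v : N → ℝ := ⇑(hHerm.eigenvectorBasis i) with hvdef
  have hv : (T - S) *ᵥ v = μ • v := hHerm.mulVec_eigenvectorBasis i
  have hvne : v ≠ 0 := by
    intro h0
    have h1 : hHerm.eigenvectorBasis i = 0 := by
      ext j
      exact congrFun h0 j
    have h2 := hHerm.eigenvectorBasis.orthonormal.1 i
    rw [h1, norm_zero] at h2
    norm_num at h2
  -- quadratic forms
  have hsv : S *ᵥ v - (S *ᵥ v) = 0 := sub_self _
  set s := S *ᵥ v with hsdef
  set t := T *ᵥ v with htdef
  have hst : t - s = μ • v := by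
    rw [← hv, Matrix.sub_mulVec]
  have hA2 : v ⬝ᵥ (A *ᵥ v) = s ⬝ᵥ s := by
    conv_lhs => rw [← hA.sqrt_mul_self, ← hSdef, ← Matrix.mulVec_mulVec,
      herm_dot hS.isHermitian]
  have hB2 : v ⬝ᵥ (B *ᵥ v) = t ⬝ᵥ t := by
    conv_lhs => rw [← hB.sqrt_mul_self, ← hTdef, ← Matrix.mulVec_mulVec,
      herm_dot hT.isHermitian]
  have hle : v ⬝ᵥ (A *ᵥ v) ≤ v ⬝ᵥ (B *ᵥ v) := by
    have := hAB.dotProduct_mulVec_nonneg v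
    rw [star_trivial, Matrix.sub_mulVec, dotProduct_sub] at this
    linarith
  have hdiff : t ⬝ᵥ t - s ⬝ᵥ s = μ * (v ⬝ᵥ t + v ⬝ᵥ s) := by
    have expand : t ⬝ᵥ t - s ⬝ᵥ s = (t - s) ⬝ᵥ (t + s) := by
      simp [dotProduct_add, sub_dotProduct, dotProduct_comm t s]
    rw [expand, hst]
    simp [smul_dotProduct, dotProduct_add, smul_eq_mul, mul_add]
  have hvs : 0 ≤ v ⬝ᵥ s := by have := hS.dotProduct_mulVec_nonneg v; rwa [star_trivial] at this
  have hvt : 0 ≤ v ⬝ᵥ t := by have := hT.dotProduct_mulVec_nonneg v; rwa [star_trivial] at this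
  have hsum : v ⬝ᵥ t + v ⬝ᵥ s ≤ 0 := by
    nlinarith [(show μ < 0 from hlt)]
  have hvs0 : v ⬝ᵥ s = 0 := by linarith
  have hvt0 : v ⬝ᵥ t = 0 := by linarith
  have hs0 : s = 0 := by
    have := (hS.dotProduct_mulVec_zero_iff v).mp (by rwa [star_trivial])
    exact this
  have ht0 : t = 0 := by
    have := (hT.dotProduct_mulVec_zero_iff v).mp (by rwa [star_trivial])
    exact this
  have : μ • v = 0 := by rw [← hst, hs0, ht0, sub_zero]
  rcases smul_eq_zero.mp this with h | h
  · exact absurd h (ne_of_lt hlt)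
  · exact hvne h

lemma psd_smul {M : Matrix N N ℝ} (hM : M.PosSemidef) {c : ℝ} (hc : 0 ≤ c) :
    (c • M).PosSemidef := by
  refine Matrix.PosSemidef.of_dotProduct_mulVec_nonneg ?_ fun x => ?_
  · unfold Matrix.IsHermitian
    rw [Matrix.conjTranspose_smul, hM.1.eq]
    simp
  · rw [star_trivial, Matrix.smul_mulVec, dotProduct_smul, smul_eq_mul]
    have := hM.dotProduct_mulVec_nonneg x
    rw [star_trivial] at this
    positivity

lemma smul_one_psd {c : ℝ} (hc : 0 ≤ c) : ((c • 1 : Matrix N N ℝ)).PosSemidef :=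
  psd_smul Matrix.PosSemidef.one hc

lemma sqrt_posDef {C : Matrix N N ℝ} (hC : C.PosDef) : hC.posSemidef.sqrt.PosDef := by
  set S := hC.posSemidef.sqrt with hS
  have hSp : S.PosSemidef := hC.posSemidef.posSemidef_sqrt
  refine Matrix.PosDef.of_dotProduct_mulVec_pos hSp.1 fun x hx => ?_
  rcases lt_or_eq_of_le (hSp.dotProduct_mulVec_nonneg x) with h | h
  · exact h
  · exfalso
    have hSx : S *ᵥ x = 0 := (hSp.dotProduct_mulVec_zero_iff x).mp h.symm
    have hCx : C *ᵥ x = 0 := by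
      rw [← hC.posSemidef.sqrt_mul_self, ← hS, ← Matrix.mulVec_mulVec, hSx, Matrix.mulVec_zero]
    have := hC.dotProduct_mulVec_pos hx
    rw [hCx, dotProduct_zero] at this
    exact lt_irrefl 0 this

lemma posdef_add_smul_one {A : Matrix N N ℝ} (hA : A.PosSemidef) {ε : ℝ} (hε : 0 < ε) :
    (A + ε • 1).PosDef := by
  refine Matrix.PosDef.of_dotProduct_mulVec_pos (hA.1.add (smul_one_psd hε.le).1) fun x hx => ?_
  rw [star_trivial, Matrix.add_mulVec, dotProduct_add, Matrix.smul_mulVec,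
    Matrix.one_mulVec, dotProduct_smul, smul_eq_mul]
  have h1 := hA.dotProduct_mulVec_nonneg x
  rw [star_trivial] at h1
  have h2 : 0 < x ⬝ᵥ x := by
    have := Matrix.dotProduct_self_star_pos_iff.mpr hx
    rwa [star_trivial] at this
  nlinarith


lemma inv_antitone {A B : Matrix N N ℝ} (hA : A.PosDef) (hB : B.PosDef)
    (hAB : (B - A).PosSemidef) : (A⁻¹ - B⁻¹).PosSemidef := by
  have hAH := hA.isHermitian
  have hBH := hB.isHermitian
  have hAiH : (A⁻¹).IsHermitian := hA.inv.isHermitian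
  have hBiH : (B⁻¹).IsHermitian := hB.inv.isHermitian
  refine Matrix.PosSemidef.of_dotProduct_mulVec_nonneg (hAiH.sub hBiH) fun x => ?_
  rw [star_trivial, Matrix.sub_mulVec, dotProduct_sub]
  set y := B⁻¹ *ᵥ x with hy
  set z := A⁻¹ *ᵥ x with hz
  have hBy : B *ᵥ y = x := by
    rw [hy, Matrix.mulVec_mulVec, Matrix.mul_nonsing_inv _ ((Matrix.isUnit_iff_isUnit_det _).mp hB.isUnit), Matrix.one_mulVec]
  have hAz : A *ᵥ z = x := by
    rw [hz, Matrix.mulVec_mulVec, Matrix.mul_nonsing_inv _ ((Matrix.isUnit_iff_isUnit_det _).mp hA.isUnit), Matrix.one_mulVec]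
  -- x ⬝ᵥ B⁻¹ x = 2 x⬝y - y⬝By
  have h1 : y ⬝ᵥ (B *ᵥ y) = x ⬝ᵥ y := by rw [herm_dot hBH, hBy, dotProduct_comm]
  have h2 : y ⬝ᵥ (A *ᵥ y) ≤ y ⬝ᵥ (B *ᵥ y) := by
    have := hAB.dotProduct_mulVec_nonneg y
    rw [star_trivial, Matrix.sub_mulVec, dotProduct_sub] at this
    linarith
  -- (y-z) ⬝ A (y-z) ≥ 0 expand
  have h3 : 0 ≤ (y - z) ⬝ᵥ (A *ᵥ (y - z)) := by
    have := hA.posSemidef.dotProduct_mulVec_nonneg (y - z); rwa [star_trivial] at this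
  have h4 : (y - z) ⬝ᵥ (A *ᵥ (y - z)) = y ⬝ᵥ (A *ᵥ y) - 2 * (x ⬝ᵥ y) + x ⬝ᵥ z := by
    have e1 : y ⬝ᵥ (A *ᵥ z) = x ⬝ᵥ y := by rw [dotProduct_comm, hAz]
    have e2 : z ⬝ᵥ (A *ᵥ y) = x ⬝ᵥ y := by rw [herm_dot hAH, hAz]
    have e3 : z ⬝ᵥ (A *ᵥ z) = x ⬝ᵥ z := by rw [dotProduct_comm, hAz]
    rw [Matrix.mulVec_sub, dotProduct_sub, sub_dotProduct, sub_dotProduct, e1, e2, e3]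
    ring
  linarith

lemma sqrt_congr {X Y : Matrix N N ℝ} (hX : X.PosSemidef) (hY : Y.PosSemidef) (h : X = Y) :
    hX.sqrt = hY.sqrt := by subst h; rfl

lemma trace_mono_psd {X Y : Matrix N N ℝ} (h : (Y - X).PosSemidef) : X.trace ≤ Y.trace := by
  have := trace_nonneg_of_psd h
  rw [Matrix.trace_sub] at this
  linarith

-- mul by inverse of sqrt recovers sqrt
lemma mul_inv_sqrt {C : Matrix N N ℝ} (hC : C.PosDef) : C * (hC.posSemidef.sqrt)⁻¹ = hC.posSemidef.sqrt := by
  have h : ∀ S : Matrix N N ℝ, S.PosDef → S * S = C → C * S⁻¹ = S := by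
    intro S hS hSC
    rw [← hSC, Matrix.mul_assoc, Matrix.mul_nonsing_inv _
      ((Matrix.isUnit_iff_isUnit_det _).mp hS.isUnit), Matrix.mul_one]
  exact h _ (sqrt_posDef hC) (hC.posSemidef.sqrt_mul_self)

lemma trace_sqrt_add_le_posdef {A B : Matrix N N ℝ} (hA : A.PosDef) (hB : B.PosDef)
    (hC : (A + B).PosSemidef) :
    hC.sqrt.trace ≤ hA.posSemidef.sqrt.trace + hB.posSemidef.sqrt.trace := by
  have hCd : (A + B).PosDef := hA.add hB
  have e0 : hC.sqrt = hCd.posSemidef.sqrt := sqrt_congr _ _ rfl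
  rw [e0]
  set Cs := hCd.posSemidef.sqrt with hCs
  have hCsd : Cs.PosDef := sqrt_posDef hCd
  set As := hA.posSemidef.sqrt with hAs
  set Bs := hB.posSemidef.sqrt with hBs
  have hAsd : As.PosDef := sqrt_posDef hA
  have hBsd : Bs.PosDef := sqrt_posDef hB
  have key : Cs.trace = (A * Cs⁻¹).trace + (B * Cs⁻¹).trace := by
    rw [← Matrix.trace_add, ← Matrix.add_mul, mul_inv_sqrt hCd]
  rw [key]
  have hBA : ((A + B) - A).PosSemidef := by
    rw [add_sub_cancel_left]; exact hB.posSemidef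
  have hAB' : ((A + B) - B).PosSemidef := by
    rw [add_sub_cancel_right]; exact hA.posSemidef
  have m1 : (A * Cs⁻¹).trace ≤ (A * As⁻¹).trace :=
    trace_mul_mono hA.posSemidef (inv_antitone hAsd hCsd (sqrt_mono hA.posSemidef hCd.posSemidef hBA))
  have m2 : (B * Cs⁻¹).trace ≤ (B * Bs⁻¹).trace :=
    trace_mul_mono hB.posSemidef (inv_antitone hBsd hCsd (sqrt_mono hB.posSemidef hCd.posSemidef hAB'))
  have e1 : A * As⁻¹ = As := mul_inv_sqrt hA
  have e2 : B * Bs⁻¹ = Bs := mul_inv_sqrt hB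
  rw [e1] at m1
  rw [e2] at m2
  linarith

lemma trace_sqrt_perturb {A : Matrix N N ℝ} (hA : A.PosSemidef) {ε : ℝ} (hε : 0 ≤ ε)
    (hAε : (A + ε • 1).PosSemidef) :
    hAε.sqrt.trace ≤ hA.sqrt.trace + (Fintype.card N : ℝ) * Real.sqrt ε := by
  set r := Real.sqrt ε with hr
  set D := hA.sqrt + r • (1 : Matrix N N ℝ) with hD
  have hDp : D.PosSemidef := hA.posSemidef_sqrt.add (smul_one_psd (Real.sqrt_nonneg ε))
  have hD2 : D ^ 2 = (A + ε • 1) + (2 * r) • hA.sqrt := by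
    rw [pow_two, hD]
    simp only [Matrix.add_mul, Matrix.mul_add, Matrix.smul_mul, Matrix.mul_smul,
      hA.sqrt_mul_self, smul_smul, Matrix.mul_one, Matrix.one_mul]
    rw [show ε = r * r from (Real.mul_self_sqrt hε).symm]
    module
  have hsub : (D ^ 2 - (A + ε • 1)).PosSemidef := by
    rw [hD2, add_sub_cancel_left]
    exact psd_smul hA.posSemidef_sqrt (by positivity)
  have hmono := sqrt_mono hAε (hDp.pow 2) hsub
  have hsq : (hDp.pow 2).sqrt = D := hDp.sqrt_sq
  rw [hsq] at hmono
  have := trace_mono_psd hmono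
  calc hAε.sqrt.trace ≤ D.trace := this
    _ = hA.sqrt.trace + (Fintype.card N : ℝ) * r := by
        rw [hD, Matrix.trace_add, Matrix.trace_smul, Matrix.trace_one]
        simp [mul_comm]

lemma trace_sqrt_subadd {A B : Matrix N N ℝ} (hA : A.PosSemidef) (hB : B.PosSemidef)
    (hC : (A + B).PosSemidef) :
    hC.sqrt.trace ≤ hA.sqrt.trace + hB.sqrt.trace := by
  refine le_of_forall_pos_le_add fun δ hδ => ?_
  set c : ℝ := (Fintype.card N : ℝ)
  have hc : 0 ≤ c := Nat.cast_nonneg _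
  set ε : ℝ := (δ / (2 * c + 1)) ^ 2 with hε
  have hd : 0 < δ / (2 * c + 1) := by positivity
  have hεpos : 0 < ε := by positivity
  have hsε : Real.sqrt ε = δ / (2 * c + 1) := Real.sqrt_sq hd.le
  have hAε : (A + ε • 1).PosDef := posdef_add_smul_one hA hεpos
  have hBε : (B + ε • 1).PosDef := posdef_add_smul_one hB hεpos
  have hCε : ((A + ε • 1) + (B + ε • 1)).PosSemidef := (hAε.add hBε).posSemidef
  -- step 1 : sqrt (A+B) ≤ sqrt of perturbed sum
  have heq : (A + ε • 1) + (B + ε • 1) = (A + B) + (2 * ε) • 1 := by module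
  have hstep1 : hC.sqrt.trace ≤ hCε.sqrt.trace := by
    refine trace_mono_psd (sqrt_mono hC hCε ?_)
    rw [heq, add_sub_cancel_left]
    exact smul_one_psd (by positivity)
  have hstep2 := trace_sqrt_add_le_posdef hAε hBε hCε
  have hstep3 := trace_sqrt_perturb hA hεpos.le hAε.posSemidef
  have hstep4 := trace_sqrt_perturb hB hεpos.le hBε.posSemidef
  have hbound : 2 * (c * Real.sqrt ε) ≤ δ := by
    rw [hsε]
    have h1 : (0:ℝ) < 2 * c + 1 := by positivity
    calc 2 * (c * (δ / (2 * c + 1))) = δ * (2 * c) / (2 * c + 1) := by ring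
      _ ≤ δ := by rw [div_le_iff₀ h1]; nlinarith
  calc hC.sqrt.trace ≤ hCε.sqrt.trace := hstep1
    _ ≤ hAε.posSemidef.sqrt.trace + hBε.posSemidef.sqrt.trace := hstep2
    _ ≤ (hA.sqrt.trace + c * Real.sqrt ε) + (hB.sqrt.trace + c * Real.sqrt ε) := by
        exact add_le_add hstep3 hstep4
    _ ≤ hA.sqrt.trace + hB.sqrt.trace + δ := by linarith

end Aux

/-- With `svdb(M) = (1/n)·(trace √(MᵀM))²`, for the stacked workload `W = [W₁; W₂]` (union):
`√svdb(W₁) + √svdb(W₂) ≥ √svdb(W)`. -/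
theorem sqrt_svdb_union_le {m₁ m₂ n : ℕ}
    (W₁ : Matrix (Fin m₁) (Fin n) ℝ) (W₂ : Matrix (Fin m₂) (Fin n) ℝ)
    (h₁ : (W₁ᵀ * W₁).PosSemidef) (h₂ : (W₂ᵀ * W₂).PosSemidef)
    (hW : (((Matrix.fromRows W₁ W₂))ᵀ * (Matrix.fromRows W₁ W₂)).PosSemidef) :
    Real.sqrt ((1 / (n : ℝ)) * hW.sqrt.trace ^ 2)
      ≤ Real.sqrt ((1 / (n : ℝ)) * h₁.sqrt.trace ^ 2)
        + Real.sqrt ((1 / (n : ℝ)) * h₂.sqrt.trace ^ 2) := by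
  have key : ((Matrix.fromRows W₁ W₂))ᵀ * (Matrix.fromRows W₁ W₂)
      = W₁ᵀ * W₁ + W₂ᵀ * W₂ := by
    rw [Matrix.transpose_fromRows, Matrix.fromCols_mul_fromRows]
  have hAB : (W₁ᵀ * W₁ + W₂ᵀ * W₂).PosSemidef := key ▸ hW
  have e : hW.sqrt = hAB.sqrt := sqrt_congr hW hAB key
  have tsub : hW.sqrt.trace ≤ h₁.sqrt.trace + h₂.sqrt.trace := by
    rw [e]
    exact trace_sqrt_subadd h₁ h₂ hAB
  have t0 : 0 ≤ hW.sqrt.trace := trace_nonneg_of_psd hW.posSemidef_sqrt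
  have t1 : 0 ≤ h₁.sqrt.trace := trace_nonneg_of_psd h₁.posSemidef_sqrt
  have t2 : 0 ≤ h₂.sqrt.trace := trace_nonneg_of_psd h₂.posSemidef_sqrt
  have hn : (0:ℝ) ≤ 1 / (n : ℝ) := by positivity
  rw [Real.sqrt_mul hn, Real.sqrt_mul hn, Real.sqrt_mul hn,
    Real.sqrt_sq t0, Real.sqrt_sq t1, Real.sqrt_sq t2, ← mul_add]
  exact mul_le_mul_of_nonneg_left tsub (Real.sqrt_nonneg _)
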